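/- Let n ≥ 2 and let Q be a real symmetric positive semidefinite n×n matrix. For s = (s₁,…,s_{n−1}) ∈ [0,1]^{n−1} define the matrix Q(s) by Q(s)_{ii} = Q_{ii} and, for i < j, Q(s)_{ij} = Q(s)_{ji} = (∏_{k=i}^{j−1} s_k) · Q_{ij}. Then Q(s) is positive semidefinite for every s ∈ [0,1]^{n−1}. -/

import Mathlib

open scoped BigOperators
open Matrix

/-- `svalQ n s k` is the interpolation parameter `s` at 0-based position `k < n−1`
(equal to `1` out of range). -/
noncomputable def svalQ (n : ℕ) (s : Fin (n - 1) → ℝ) (k : ℕ) : ℝ :=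
  if h : k < n - 1 then s ⟨k, h⟩ else 1

/-- Gram vectors for the interpolation: `uQ t i` is a unit vector with
`⟪uQ t i, uQ t j⟫ = ∏_{k=i}^{j-1} t k`. -/
noncomputable def uQ (t : ℕ → ℝ) : ℕ → ℕ → ℝ
  | 0, m => if m = 0 then 1 else 0
  | i + 1, m => t i * uQ t i m + Real.sqrt (1 - t i ^ 2) * (if m = i + 1 then 1 else 0)

lemma uQ_eq_zero (t : ℕ → ℝ) : ∀ i m, i < m → uQ t i m = 0 := by
  intro i
  induction i with
  | zero => intro m hm; simp [uQ]; omega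
  | succ i ih =>
    intro m hm
    have h1 : uQ t i m = 0 := ih m (by omega)
    have h2 : m ≠ i + 1 := by omega
    simp [uQ, h1, h2]

lemma uQ_norm (t : ℕ → ℝ) (ht : ∀ k, t k ∈ Set.Icc (0 : ℝ) 1) :
    ∀ i N, i < N → ∑ m ∈ Finset.range N, uQ t i m * uQ t i m = 1 := by
  intro i
  induction i with
  | zero =>
    intro N hN
    have : ∀ m, uQ t 0 m * uQ t 0 m = if m = 0 then (1 : ℝ) else 0 := by
      intro m; by_cases h : m = 0 <;> simp [uQ, h]
    rw [Finset.sum_congr rfl fun m _ => this m, Finset.sum_ite_eq' (Finset.range N) 0 (fun _ => (1:ℝ))]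
    simp [Finset.mem_range.mpr hN]
  | succ i ih =>
    intro N hN
    set c := Real.sqrt (1 - t i ^ 2) with hc
    have hsq : c ^ 2 = 1 - t i ^ 2 := by
      apply Real.sq_sqrt
      have h1 := (ht i).1; have h2 := (ht i).2
      nlinarith
    have expand : ∀ m, uQ t (i + 1) m * uQ t (i + 1) m =
        t i ^ 2 * (uQ t i m * uQ t i m) +
        (2 * t i * c) * (uQ t i m * (if m = i + 1 then 1 else 0)) +
        c ^ 2 * (if m = i + 1 then (1 : ℝ) else 0) := by
      intro m; by_cases h : m = i + 1 <;> simp [uQ, h, ← hc] <;> ring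
    rw [Finset.sum_congr rfl fun m _ => expand m]
    rw [Finset.sum_add_distrib, Finset.sum_add_distrib, ← Finset.mul_sum, ← Finset.mul_sum,
      ← Finset.mul_sum]
    have hmem : i + 1 ∈ Finset.range N := Finset.mem_range.mpr hN
    have s1 : ∑ m ∈ Finset.range N, uQ t i m * uQ t i m = 1 := ih N (by omega)
    have s2 : ∑ m ∈ Finset.range N, uQ t i m * (if m = i + 1 then (1:ℝ) else 0) = 0 := by
      simp only [mul_ite, mul_one, mul_zero]
      rw [Finset.sum_ite_eq' (Finset.range N) (i + 1) (fun m => uQ t i m)]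
      simp [hmem, uQ_eq_zero t i (i + 1) (by omega)]
    have s3 : ∑ m ∈ Finset.range N, (if m = i + 1 then (1:ℝ) else 0) = 1 := by
      rw [Finset.sum_ite_eq' (Finset.range N) (i + 1) (fun _ => (1:ℝ))]
      simp [hmem]
    rw [s1, s2, s3, hsq]; ring

lemma uQ_inner (t : ℕ → ℝ) (ht : ∀ k, t k ∈ Set.Icc (0 : ℝ) 1) (i : ℕ) :
    ∀ j N, i ≤ j → j < N →
      ∑ m ∈ Finset.range N, uQ t i m * uQ t j m = ∏ k ∈ Finset.Ico i j, t k := by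
  intro j
  induction j with
  | zero =>
    intro N hij hN
    have : i = 0 := Nat.le_zero.mp hij
    subst this
    simp [uQ_norm t ht 0 N hN]
  | succ j ih =>
    intro N hij hN
    rcases eq_or_lt_of_le hij with h | h
    · rw [h, Finset.Ico_self, Finset.prod_empty]
      exact uQ_norm t ht (j + 1) N hN
    · have hij' : i ≤ j := by omega
      set c := Real.sqrt (1 - t j ^ 2) with hc
      have expand : ∀ m, uQ t i m * uQ t (j + 1) m =
          t j * (uQ t i m * uQ t j m) + c * (uQ t i m * (if m = j + 1 then 1 else 0)) := by
        intro m; simp only [uQ, ← hc]; ring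
      rw [Finset.sum_congr rfl fun m _ => expand m, Finset.sum_add_distrib,
        ← Finset.mul_sum, ← Finset.mul_sum]
      have hmem : j + 1 ∈ Finset.range N := Finset.mem_range.mpr hN
      have s2 : ∑ m ∈ Finset.range N, uQ t i m * (if m = j + 1 then (1:ℝ) else 0) = 0 := by
        simp only [mul_ite, mul_one, mul_zero]
        rw [Finset.sum_ite_eq' (Finset.range N) (j + 1) (fun m => uQ t i m)]
        simp [hmem, uQ_eq_zero t i (j + 1) (by omega)]
      rw [ih N hij' (by omega), s2, Finset.prod_Ico_succ_top hij']
      ring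

/-- The Brydges–Federbush interpolation preserves positive
semidefiniteness: if `Q` is positive semidefinite and `Q(s)` is obtained from `Q` by
multiplying the off-diagonal entry `Q_{ij}` (`i < j`) by `∏_{k=i}^{j−1} s_k` with all
`s_k ∈ [0,1]`, then `Q(s)` is positive semidefinite. -/
theorem interpolated_matrix_posSemidef
    (n : ℕ) (hn : 2 ≤ n)
    (Q : Matrix (Fin n) (Fin n) ℝ) (hQ : Q.PosSemidef)
    (s : Fin (n - 1) → ℝ) (hs : ∀ k, s k ∈ Set.Icc (0 : ℝ) 1) :
    Matrix.PosSemidef (Matrix.of fun i j : Fin n =>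
      (∏ k ∈ Finset.Ico (min i.val j.val) (max i.val j.val), svalQ n s k) * Q i j) := by
  set t : ℕ → ℝ := svalQ n s with htdef
  have ht : ∀ k, t k ∈ Set.Icc (0 : ℝ) 1 := by
    intro k
    by_cases h : k < n - 1
    · simpa [htdef, svalQ, h] using hs ⟨k, h⟩
    · simp [htdef, svalQ, h]
  have hQsymm : ∀ i j, Q j i = Q i j := by
    intro i j
    have := congrFun (congrFun hQ.1 i) j
    simpa [Matrix.conjTranspose_apply] using this
  have key : ∀ i j : Fin n,
      (∏ k ∈ Finset.Ico (min i.val j.val) (max i.val j.val), t k)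
        = ∑ m ∈ Finset.range n, uQ t i.val m * uQ t j.val m := by
    intro i j
    rcases le_total i.val j.val with h | h
    · rw [min_eq_left h, max_eq_right h]
      exact (uQ_inner t ht i.val j.val n h j.isLt).symm
    · rw [min_eq_right h, max_eq_left h,
        Finset.sum_congr rfl fun m _ => mul_comm (uQ t i.val m) (uQ t j.val m)]
      exact (uQ_inner t ht j.val i.val n h i.isLt).symm
  rw [Matrix.posSemidef_iff_dotProduct_mulVec]
  constructor
  · ext i j
    simp only [Matrix.conjTranspose_apply, Matrix.of_apply, star_trivial]
    rw [hQsymm j i, min_comm, max_comm]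
  · intro x
    have hrw : (star x) ⬝ᵥ ((Matrix.of fun i j : Fin n =>
        (∏ k ∈ Finset.Ico (min i.val j.val) (max i.val j.val), svalQ n s k) * Q i j) *ᵥ x)
        = ∑ m ∈ Finset.range n,
            (fun i : Fin n => x i * uQ t i.val m) ⬝ᵥ (Q *ᵥ fun i : Fin n => x i * uQ t i.val m) := by
      simp only [dotProduct, mulVec, Matrix.of_apply, star_trivial, ← htdef, key,
        Finset.sum_mul, Finset.mul_sum]
      have swap : ∀ f : Fin n → Fin n → ℕ → ℝ,
          ∑ i : Fin n, ∑ j : Fin n, ∑ m ∈ Finset.range n, f i j m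
            = ∑ m ∈ Finset.range n, ∑ i : Fin n, ∑ j : Fin n, f i j m := by
        intro f
        rw [show (∑ i : Fin n, ∑ j : Fin n, ∑ m ∈ Finset.range n, f i j m)
            = ∑ i : Fin n, ∑ m ∈ Finset.range n, ∑ j : Fin n, f i j m from
          Finset.sum_congr rfl fun i _ => Finset.sum_comm]
        exact Finset.sum_comm
      rw [swap (fun i j m => x i * (uQ t i.val m * uQ t j.val m * Q i j * x j))]
      refine Finset.sum_congr rfl fun m _ => Finset.sum_congr rfl fun i _ =>
        Finset.sum_congr rfl fun j _ => by ring
    rw [hrw]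
    refine Finset.sum_nonneg fun m _ => ?_
    have h0 := hQ.dotProduct_mulVec_nonneg (fun i : Fin n => x i * uQ t i.val m)
    simp only [star_trivial] at h0
    exact h0
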